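/- Let n ∈ ℕ, let r ≤ s be real numbers, and let g : [r,s] → Mₙ(ℂ) be a C¹ map taking values in invertible matrices. Then the series Σ_{k≥0} ∫_{Δᵏ_{[r,s]}} (g(t₁)⁻¹g′(t₁)) ⋯ (g(t_k)⁻¹g′(t_k)) dt converges and its sum equals g(r)⁻¹ · g(s). (This is the multiplicative fundamental theorem of calculus for iterated integrals, equation (Gltrans) in the Appendix, used to prove that the Bismut–Chern–Simons form is well defined.) -/

import Mathlib

open MeasureTheory

attribute [local instance] Matrix.linftyOpNormedAddCommGroup Matrix.linftyOpNormedSpace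

/-- The simplex `Δᵏ_{[a,b]} = {t ∈ ℝᵏ : a ≤ t₁ ≤ ⋯ ≤ t_k ≤ b}`. -/
def simplexSet (a b : ℝ) (k : ℕ) : Set (Fin k → ℝ) :=
  {t | (∀ i, a ≤ t i ∧ t i ≤ b) ∧ ∀ i j : Fin k, i ≤ j → t i ≤ t j}

/-- The iterated integral `∫_{Δᵏ_{[a,b]}} F₁(t₁)⋯F_k(t_k) dt` of the ordered matrix
product, computed entrywise.  For `k = 0` it is the identity matrix. -/
noncomputable def iterInt {N : Type} [Fintype N] [DecidableEq N]
    (a b : ℝ) (k : ℕ) (F : Fin k → ℝ → Matrix N N ℂ) : Matrix N N ℂ :=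
  Matrix.of fun i j =>
    ∫ t : Fin k → ℝ in simplexSet a b k, ((List.ofFn fun l => F l (t l)).prod) i j

attribute [local instance] Matrix.linftyOpNormedRing Matrix.linftyOpNormedAlgebra

noncomputable instance matENormedAddCommMonoid {N : Type} [Fintype N] :
    ENormedAddCommMonoid (Matrix N N ℂ) :=
  NormedAddCommGroup.toENormedAddCommMonoid

section aux

variable {a b : ℝ} {k : ℕ}

lemma simplexSet_isClosed (a b : ℝ) (k : ℕ) : IsClosed (simplexSet a b k) := by
  have h1 : simplexSet a b k = (⋂ i : Fin k, {t : Fin k → ℝ | a ≤ t i} ∩ {t | t i ≤ b}) ∩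
      ⋂ (i : Fin k) (j : Fin k) (_ : i ≤ j), {t : Fin k → ℝ | t i ≤ t j} := by
    ext t
    simp only [simplexSet, Set.mem_inter_iff, Set.mem_iInter, Set.mem_setOf_eq]
  rw [h1]
  refine IsClosed.inter (isClosed_iInter fun i => IsClosed.inter ?_ ?_)
    (isClosed_iInter fun i => isClosed_iInter fun j => isClosed_iInter fun _ => ?_)
  · exact isClosed_le continuous_const (continuous_apply i)
  · exact isClosed_le (continuous_apply i) continuous_const
  · exact isClosed_le (continuous_apply i) (continuous_apply j)

lemma simplexSet_subset_pi : simplexSet a b k ⊆ Set.pi Set.univ (fun _ : Fin k => Set.Icc a b) := by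
  intro t ht i _; exact ⟨(ht.1 i).1, (ht.1 i).2⟩

lemma simplexSet_isCompact (a b : ℝ) (k : ℕ) : IsCompact (simplexSet a b k) := by
  refine (isCompact_univ_pi fun _ => isCompact_Icc).of_isClosed_subset
    (simplexSet_isClosed a b k) simplexSet_subset_pi

lemma simplexSet_measurable (a b : ℝ) (k : ℕ) : MeasurableSet (simplexSet a b k) :=
  (simplexSet_isClosed a b k).measurableSet

end aux

section entry

variable {N : Type} [Fintype N] [DecidableEq N]

/-- entry extraction as a continuous linear map -/
noncomputable def entryCLM (i j : N) : Matrix N N ℂ →L[ℂ] ℂ :=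
  LinearMap.mkContinuous
    { toFun := fun X => X i j
      map_add' := fun X Y => rfl
      map_smul' := fun c X => rfl } 1
    (fun X => by
      rw [one_mul]
      have h1 : ‖X i j‖₊ ≤ ∑ j', ‖X i j'‖₊ :=
        Finset.single_le_sum (f := fun j' => ‖X i j'‖₊) (fun _ _ => zero_le) (Finset.mem_univ j)
      have h2 : (∑ j', ‖X i j'‖₊) ≤ Finset.univ.sup fun i => ∑ j', ‖X i j'‖₊ :=
        Finset.le_sup (f := fun i => ∑ j', ‖X i j'‖₊) (Finset.mem_univ i)
      have := h1.trans h2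
      rw [Matrix.linfty_opNorm_def]
      exact_mod_cast this)

end entry

section prodcont

variable {N : Type} [Fintype N] [DecidableEq N]

lemma continuousOn_listProd {α : Type*} [TopologicalSpace α] {S : Set α} :
    ∀ {k : ℕ} (B : Fin k → α → Matrix N N ℂ), (∀ l, ContinuousOn (B l) S) →
    ContinuousOn (fun x => (List.ofFn fun l => B l x).prod) S := by
  intro k
  induction k with
  | zero => intro B hB; simp only [List.ofFn_zero, List.prod_nil]; exact continuousOn_const
  | succ k ih =>
    intro B hB
    simp only [List.ofFn_succ, List.prod_cons]
    exact (hB 0).mul (ih _ fun l => hB _)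

lemma iterInt_eq (a b : ℝ) (k : ℕ) (F : Fin k → ℝ → Matrix N N ℂ)
    (hInt : IntegrableOn (fun t : Fin k → ℝ => (List.ofFn fun l => F l (t l)).prod)
      (simplexSet a b k) volume) :
    iterInt a b k F
      = ∫ t : Fin k → ℝ in simplexSet a b k, (List.ofFn fun l => F l (t l)).prod := by
  ext i j
  exact (entryCLM (N := N) i j).integral_comp_comm hInt

end prodcont

noncomputable def mulRightCLM {N : Type} [Fintype N] [DecidableEq N] (B : Matrix N N ℂ) :
    Matrix N N ℂ →L[ℂ] Matrix N N ℂ :=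
  LinearMap.mkContinuous
    { toFun := fun X => X * B
      map_add' := fun X Y => add_mul X Y B
      map_smul' := fun c X => smul_mul_assoc c X B }
    ‖B‖ (fun X => by rw [mul_comm ‖B‖]; exact Matrix.linfty_opNorm_mul X B)

section rec

variable {N : Type} [Fintype N] [DecidableEq N] {r s : ℝ}

lemma contOn_prod (A : ℝ → Matrix N N ℂ) (hA : ContinuousOn A (Set.Icc r s)) {u : ℝ}
    (hu : u ∈ Set.Icc r s) (k : ℕ) :
    ContinuousOn (fun t : Fin k → ℝ => (List.ofFn fun l => A (t l)).prod) (simplexSet r u k) :=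
  continuousOn_listProd _ fun l =>
    hA.comp ((continuous_apply l).continuousOn) fun t ht => ⟨(ht.1 l).1, (ht.1 l).2.trans hu.2⟩

lemma intOn_prod (A : ℝ → Matrix N N ℂ) (hA : ContinuousOn A (Set.Icc r s)) {u : ℝ}
    (hu : u ∈ Set.Icc r s) (k : ℕ) :
    IntegrableOn (fun t : Fin k → ℝ => (List.ofFn fun l => A (t l)).prod)
      (simplexSet r u k) volume :=
  (contOn_prod A hA hu k).integrableOn_compact (simplexSet_isCompact _ _ _)

lemma simplex_rec (A : ℝ → Matrix N N ℂ) (hA : ContinuousOn A (Set.Icc r s)) (k : ℕ)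
    {x : ℝ} (hx : x ∈ Set.Icc r s) :
    (∫ t : Fin (k+1) → ℝ in simplexSet r x (k+1),
        (List.ofFn fun l : Fin (k+1) => A (t l)).prod)
      = ∫ u in Set.Icc r x,
          (∫ t : Fin k → ℝ in simplexSet r u k, (List.ofFn fun l : Fin k => A (t l)).prod)
            * A u := by
  have hIcc : Set.Icc r x ⊆ Set.Icc r s := Set.Icc_subset_Icc le_rfl hx.2
  set T : Set (ℝ × (Fin k → ℝ)) :=
    {p | p.1 ∈ Set.Icc r x ∧ p.2 ∈ simplexSet r p.1 k} with hTdef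
  set H : ℝ × (Fin k → ℝ) → Matrix N N ℂ :=
    fun p => (List.ofFn fun l : Fin k => A (p.2 l)).prod * A p.1 with hHdef
  -- T is closed
  have hTclosed : IsClosed T := by
    have : T = ({p : ℝ × (Fin k → ℝ) | r ≤ p.1} ∩ {p | p.1 ≤ x})
        ∩ ((⋂ l : Fin k, ({p : ℝ × (Fin k → ℝ) | r ≤ p.2 l} ∩ {p | p.2 l ≤ p.1}))
          ∩ ⋂ (i : Fin k) (j : Fin k) (_ : i ≤ j), {p : ℝ × (Fin k → ℝ) | p.2 i ≤ p.2 j}) := by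
      ext p
      simp only [hTdef, Set.mem_setOf_eq, Set.mem_inter_iff, Set.mem_iInter, Set.mem_Icc,
        simplexSet]
    rw [this]
    have hfst : Continuous fun p : ℝ × (Fin k → ℝ) => p.1 := continuous_fst
    have hsnd : ∀ l : Fin k, Continuous fun p : ℝ × (Fin k → ℝ) => p.2 l :=
      fun l => (continuous_apply l).comp continuous_snd
    refine IsClosed.inter (IsClosed.inter ?_ ?_) (IsClosed.inter (isClosed_iInter fun l =>
      IsClosed.inter ?_ ?_) (isClosed_iInter fun i => isClosed_iInter fun j =>
        isClosed_iInter fun _ => ?_))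
    · exact isClosed_le continuous_const hfst
    · exact isClosed_le hfst continuous_const
    · exact isClosed_le continuous_const (hsnd l)
    · exact isClosed_le (hsnd l) hfst
    · exact isClosed_le (hsnd i) (hsnd j)
  have hTsub : T ⊆ Set.Icc r x ×ˢ Set.pi Set.univ fun _ : Fin k => Set.Icc r x := by
    rintro ⟨u, t⟩ ⟨hu, ht⟩
    exact ⟨hu, fun l _ => ⟨(ht.1 l).1, (ht.1 l).2.trans hu.2⟩⟩
  have hbox : IsCompact (Set.Icc r x ×ˢ Set.pi Set.univ fun _ : Fin k => Set.Icc r x) :=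
    isCompact_Icc.prod (isCompact_univ_pi fun _ => isCompact_Icc)
  have hHcont : ContinuousOn H
      (Set.Icc r x ×ˢ Set.pi Set.univ fun _ : Fin k => Set.Icc r x) := by
    refine ContinuousOn.mul ?_ ?_
    · refine continuousOn_listProd (fun l (p : ℝ × (Fin k → ℝ)) => A (p.2 l)) fun l => ?_
      refine hA.comp ((continuous_apply l).comp continuous_snd).continuousOn ?_
      rintro ⟨u, t⟩ ⟨hu, ht⟩
      exact ⟨(ht l (Set.mem_univ l)).1, (ht l (Set.mem_univ l)).2.trans hx.2⟩
    · refine hA.comp continuous_fst.continuousOn ?_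
      rintro ⟨u, t⟩ ⟨hu, ht⟩
      exact hIcc hu
  have hHint : IntegrableOn H T := by
    refine ((hHcont.integrableOn_compact hbox).mono_set hTsub)
  -- change of variables
  have hmp := MeasureTheory.volume_preserving_piFinSuccAbove (fun _ : Fin (k+1) => ℝ) (Fin.last k)
  set e := MeasurableEquiv.piFinSuccAbove (fun _ : Fin (k+1) => ℝ) (Fin.last k) with hedef
  have happ : ∀ t : Fin (k+1) → ℝ, e t = (t (Fin.last k), fun j : Fin k => t j.castSucc) := by
    intro t
    refine Prod.ext rfl ?_
    funext j
    show t ((Fin.last k).succAbove j) = t j.castSucc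
    rw [Fin.succAbove_last]
  have hpre : e ⁻¹' T = simplexSet r x (k+1) := by
    ext t
    simp only [Set.mem_preimage, happ t, hTdef, Set.mem_setOf_eq, simplexSet, Set.mem_Icc]
    constructor
    · rintro ⟨⟨hr, hxx⟩, ⟨hb, hmono⟩⟩
      refine ⟨fun i => ?_, fun i j hij => ?_⟩
      · induction i using Fin.lastCases with
        | last => exact ⟨hr, hxx⟩
        | cast i => exact ⟨(hb i).1, ((hb i).2).trans hxx⟩
      · induction j using Fin.lastCases with
        | last =>
          induction i using Fin.lastCases with
          | last => exact le_rfl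
          | cast i => exact (hb i).2
        | cast j =>
          induction i using Fin.lastCases with
          | last =>
            have hle : Fin.castSucc j = Fin.last k := le_antisymm (Fin.le_last _) hij
            exact le_of_eq (congrArg t hle.symm)
          | cast i =>
            exact hmono i j (by simpa using hij)
    · rintro ⟨hb, hmono⟩
      refine ⟨⟨(hb (Fin.last k)).1, (hb (Fin.last k)).2⟩,
        ⟨fun i => ⟨(hb i.castSucc).1, hmono i.castSucc (Fin.last k) (Fin.le_last _)⟩,
          fun i j hij => hmono i.castSucc j.castSucc (by simpa using hij)⟩⟩
  have hcomp : ∀ t : Fin (k+1) → ℝ,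
      H (e t) = (List.ofFn fun l : Fin (k+1) => A (t l)).prod := by
    intro t
    rw [happ t, hHdef]
    simp only
    rw [List.ofFn_succ' (fun l : Fin (k+1) => A (t l)), List.concat_eq_append, List.prod_append]
    simp [Function.comp]
  have step1 : (∫ t : Fin (k+1) → ℝ in simplexSet r x (k+1),
      (List.ofFn fun l : Fin (k+1) => A (t l)).prod) = ∫ p in T, H p := by
    rw [← hpre]
    rw [← hmp.setIntegral_preimage_emb e.measurableEmbedding H T]
    exact integral_congr_ae (Filter.Eventually.of_forall fun t => (hcomp t).symm)
  rw [step1]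
  -- Fubini
  have hTm : MeasurableSet T := hTclosed.measurableSet
  have hHint' : Integrable (T.indicator H) ((volume : Measure ℝ).prod (volume : Measure (Fin k → ℝ))) := by
    rw [integrable_indicator_iff hTm, ← Measure.volume_eq_prod]
    exact hHint
  have step2 : (∫ p in T, H p) = ∫ u, ∫ t : Fin k → ℝ, T.indicator H (u, t) := by
    rw [← integral_indicator hTm, Measure.volume_eq_prod, integral_prod _ hHint']
  rw [step2]
  have inner : ∀ u : ℝ, (∫ t : Fin k → ℝ, T.indicator H (u, t))
      = (Set.Icc r x).indicator (fun u => ∫ t : Fin k → ℝ in simplexSet r u k, H (u, t)) u := by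
    intro u
    by_cases hu : u ∈ Set.Icc r x
    · rw [Set.indicator_of_mem hu]
      rw [← integral_indicator (simplexSet_measurable r u k)]
      congr 1
      funext t
      by_cases ht : t ∈ simplexSet r u k
      · rw [Set.indicator_of_mem ht, Set.indicator_of_mem (by exact ⟨hu, ht⟩)]
      · rw [Set.indicator_of_notMem ht, Set.indicator_of_notMem (fun hmem => ht hmem.2)]
    · rw [Set.indicator_of_notMem hu]
      have : ∀ t : Fin k → ℝ, T.indicator H (u, t) = 0 := by
        intro t
        exact Set.indicator_of_notMem (fun hmem => hu hmem.1) H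
      simp only [this, integral_zero]
  simp only [inner]
  rw [integral_indicator measurableSet_Icc]
  refine setIntegral_congr_fun measurableSet_Icc fun u hu => ?_
  have hus : u ∈ Set.Icc r s := hIcc hu
  have : (∫ t : Fin k → ℝ in simplexSet r u k, H (u, t))
      = ∫ t : Fin k → ℝ in simplexSet r u k,
          (mulRightCLM (A u)) ((List.ofFn fun l : Fin k => A (t l)).prod) := rfl
  rw [this]; refine (ContinuousLinearMap.integral_comp_comm _ (intOn_prod A hA hus k)).trans ?_
  rfl

end rec

section more

variable {N : Type} [Fintype N] [DecidableEq N] {r s : ℝ}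

lemma integral_Icc_eq_intervalIntegral {E : Type*} [NormedAddCommGroup E] [NormedSpace ℝ E]
    (f : ℝ → E) {a b : ℝ} (hab : a ≤ b) :
    ∫ u in Set.Icc a b, f u = ∫ u in a..b, f u := by
  rw [intervalIntegral.integral_of_le hab, MeasureTheory.integral_Icc_eq_integral_Ioc]

lemma iterInt_zero (a b : ℝ) (F : Fin 0 → ℝ → Matrix N N ℂ) : iterInt a b 0 F = 1 := by
  ext i j
  show (∫ t : Fin 0 → ℝ in simplexSet a b 0,
    ((List.ofFn fun l : Fin 0 => F l (t l)).prod) i j) = (1 : Matrix N N ℂ) i j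
  have h1 : simplexSet a b 0 = Set.univ := by
    ext t; simp [simplexSet]
  have h2 : (volume : Measure (Fin 0 → ℝ)) Set.univ = 1 := by
    rw [MeasureTheory.volume_pi, Measure.pi_univ]
    simp
  rw [h1, Measure.restrict_univ]
  simp only [List.ofFn_zero, List.prod_nil]
  rw [MeasureTheory.integral_const]
  rw [measureReal_def, h2]
  simp

lemma iterInt_succ (A : ℝ → Matrix N N ℂ) (hA : ContinuousOn A (Set.Icc r s)) (k : ℕ)
    {x : ℝ} (hx : x ∈ Set.Icc r s) :
    iterInt r x (k+1) (fun _ => A) = ∫ u in r..x, iterInt r u k (fun _ => A) * A u := by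
  rw [iterInt_eq _ _ _ _ (intOn_prod A hA hx (k+1)), simplex_rec A hA k hx,
    ← integral_Icc_eq_intervalIntegral _ hx.1]
  refine setIntegral_congr_fun measurableSet_Icc fun u hu => ?_
  have hus : u ∈ Set.Icc r s := ⟨hu.1, hu.2.trans hx.2⟩
  rw [iterInt_eq _ _ _ _ (intOn_prod A hA hus k)]

end more
/-- **Multiplicative fundamental theorem of calculus for iterated integrals**
(equation (Gltrans) in the Appendix): if `g : [r,s] → Mₙ(ℂ)` is `C¹` with invertible
values, then `Σ_{k≥0} ∫_{Δᵏ_{[r,s]}} (g⁻¹g′)(t₁)⋯(g⁻¹g′)(t_k) dt = g(r)⁻¹ · g(s)`. -/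
theorem iterInt_inv_mul_deriv_hasSum (n : ℕ) (r s : ℝ) (hrs : r ≤ s)
    (g g' : ℝ → Matrix (Fin n) (Fin n) ℂ)
    (hderiv : ∀ t ∈ Set.Icc r s, HasDerivAt g (g' t) t)
    (hg' : ContinuousOn g' (Set.Icc r s))
    (hunit : ∀ t ∈ Set.Icc r s, IsUnit (g t)) :
    HasSum (fun k => iterInt r s k fun _ t => (g t)⁻¹ * g' t) ((g r)⁻¹ * g s) := by
  set A : ℝ → Matrix (Fin n) (Fin n) ℂ := fun t => (g t)⁻¹ * g' t with hAdef
  have hrmem : r ∈ Set.Icc r s := ⟨le_rfl, hrs⟩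
  have hsmem : s ∈ Set.Icc r s := ⟨hrs, le_rfl⟩
  have hgc : ContinuousOn g (Set.Icc r s) := fun t ht =>
    ((hderiv t ht).continuousAt).continuousWithinAt
  have hdet : ∀ t ∈ Set.Icc r s, IsUnit (g t).det := fun t ht =>
    (Matrix.isUnit_iff_isUnit_det _).1 (hunit t ht)
  have hinv : ContinuousOn (fun t => (g t)⁻¹) (Set.Icc r s) := by
    intro t ht
    obtain ⟨u, hu⟩ := hdet t ht
    have h1 : ContinuousAt Ring.inverse ((g t).det) := hu ▸ NormedRing.inverse_continuousAt u
    exact (continuousAt_matrix_inv (g t) h1).comp_continuousWithinAt (hgc t ht)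
  have hA : ContinuousOn A (Set.Icc r s) := hinv.mul hg'
  have hsub : ∀ {x : ℝ}, x ∈ Set.Icc r s → Set.Icc r x ⊆ Set.Icc r s := fun hx =>
    Set.Icc_subset_Icc le_rfl hx.2
  set P : ℕ → ℝ → Matrix (Fin n) (Fin n) ℂ := fun k x => iterInt r x k (fun _ => A) with hPdef
  have hP0 : ∀ x, P 0 x = 1 := fun x => iterInt_zero r x _
  have hPrec : ∀ (k : ℕ) {x : ℝ}, x ∈ Set.Icc r s →
      P (k+1) x = ∫ u in r..x, P k u * A u := by
    intro k x hx; exact iterInt_succ A hA k hx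
  have hPcont : ∀ k, ContinuousOn (P k) (Set.Icc r s) := by
    intro k
    induction k with
    | zero =>
      have : P 0 = fun _ => (1 : Matrix (Fin n) (Fin n) ℂ) := funext hP0
      rw [this]; exact continuousOn_const
    | succ k ih =>
      have hci : ContinuousOn (fun u => P k u * A u) (Set.uIcc r s) := by
        rw [Set.uIcc_of_le hrs]; exact ih.mul hA
      have := intervalIntegral.continuousOn_primitive_interval' hci.intervalIntegrable (μ := volume) Set.left_mem_uIcc
      rw [Set.uIcc_of_le hrs] at this
      exact this.congr fun x hx => hPrec k hx
  have hPint : ∀ (k : ℕ) {x : ℝ}, x ∈ Set.Icc r s →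
      IntervalIntegrable (fun u => P k u * A u) volume r x := by
    intro k x hx
    exact (((hPcont k).mono (hsub hx)).mul (hA.mono (hsub hx))).intervalIntegrable_of_Icc hx.1
  obtain ⟨M0, hM0⟩ := isCompact_Icc.exists_bound_of_continuousOn hA
  set M : ℝ := max M0 0 with hMdef
  have hMnn : 0 ≤ M := le_max_right _ _
  have hMA : ∀ u ∈ Set.Icc r s, ‖A u‖ ≤ M := fun u hu => (hM0 u hu).trans (le_max_left _ _)
  have hone : ‖(1 : Matrix (Fin n) (Fin n) ℂ)‖ ≤ 1 := by
    rw [← Matrix.diagonal_one, Matrix.linfty_opNorm_diagonal]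
    refine pi_norm_le_iff_of_nonneg zero_le_one |>.2 fun i => by simp
  have hint_pow : ∀ (k : ℕ) (x : ℝ), (∫ u in r..x, (u - r) ^ k) = (x - r) ^ (k+1) / (k+1) := by
    intro k x
    rw [intervalIntegral.integral_comp_sub_right (fun u => u ^ k) r]
    rw [integral_pow]
    simp
  have hPbound : ∀ (k : ℕ), ∀ x ∈ Set.Icc r s, ‖P k x‖ ≤ M^k * (x - r)^k / k.factorial := by
    intro k
    induction k with
    | zero =>
      intro x hx
      have he : M ^ 0 * (x - r) ^ 0 / (Nat.factorial 0 : ℝ) = 1 := by norm_num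
      rw [hP0 x, he]; exact hone
    | succ k ih =>
      intro x hx
      rw [hPrec k hx]
      have hb : ∀ u ∈ Set.Icc r x, ‖P k u * A u‖ ≤ M^k * M / k.factorial * (u - r)^k := by
        intro u hu
        have hus : u ∈ Set.Icc r s := hsub hx hu
        have h1 : ‖P k u * A u‖ ≤ ‖P k u‖ * ‖A u‖ := norm_mul_le _ _
        have h2 : ‖P k u‖ * ‖A u‖ ≤ (M^k * (u - r)^k / k.factorial) * M :=
          mul_le_mul (ih u hus) (hMA u hus) (norm_nonneg _)
            (div_nonneg (mul_nonneg (pow_nonneg hMnn _)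
              (pow_nonneg (sub_nonneg.2 hu.1) _)) (Nat.cast_nonneg _))
        refine (h1.trans h2).trans (le_of_eq (by ring))
      have hint1 : IntervalIntegrable (fun u => ‖P k u * A u‖) volume r x := (hPint k hx).norm
      have hint2 : IntervalIntegrable (fun u => M^k * M / k.factorial * (u - r)^k) volume r x :=
        (Continuous.intervalIntegrable (continuous_const.mul ((continuous_id.sub continuous_const).pow k)) r x)
      calc ‖∫ u in r..x, P k u * A u‖ ≤ ∫ u in r..x, ‖P k u * A u‖ :=
            intervalIntegral.norm_integral_le_integral_norm hx.1
        _ ≤ ∫ u in r..x, M^k * M / k.factorial * (u - r)^k :=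
            intervalIntegral.integral_mono_on hx.1 hint1 hint2 hb
        _ = M^k * M / k.factorial * ((x - r)^(k+1) / (k+1)) := by
            rw [intervalIntegral.integral_const_mul, hint_pow]
        _ = M^(k+1) * (x - r)^(k+1) / (k+1).factorial := by
            rw [Nat.factorial_succ]
            push_cast
            field_simp
            ring
  set h : ℝ → Matrix (Fin n) (Fin n) ℂ := fun u => (g r)⁻¹ * g u with hhdef
  have hhr : h r = 1 := Matrix.nonsing_inv_mul _ (hdet r hrmem)
  have hhcont : ContinuousOn h (Set.Icc r s) := continuousOn_const.mul hgc
  have hgA : ∀ u ∈ Set.Icc r s, g u * A u = g' u := by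
    intro u hu
    rw [hAdef, ← Matrix.mul_assoc, Matrix.mul_nonsing_inv _ (hdet u hu), Matrix.one_mul]
  have hintg' : ∀ {x : ℝ}, x ∈ Set.Icc r s →
      IntervalIntegrable (fun u => (g r)⁻¹ * g' u) volume r x := by
    intro x hx
    exact (continuousOn_const.mul (hg'.mono (hsub hx))).intervalIntegrable_of_Icc hx.1
  have hFTC : ∀ x ∈ Set.Icc r s, (∫ u in r..x, h u * A u) = h x - 1 := by
    intro x hx
    have huIcc : Set.uIcc r x = Set.Icc r x := Set.uIcc_of_le hx.1
    have h1 : (∫ u in r..x, (g r)⁻¹ * g' u) = h x - h r := by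
      refine intervalIntegral.integral_eq_sub_of_hasDerivAt ?_ (hintg' hx)
      intro u hu
      rw [huIcc] at hu
      exact ((hderiv u (hsub hx hu)).const_mul ((g r)⁻¹))
    have h2 : (∫ u in r..x, h u * A u) = ∫ u in r..x, (g r)⁻¹ * g' u := by
      refine intervalIntegral.integral_congr ?_
      intro u hu
      rw [huIcc] at hu
      show h u * A u = (g r)⁻¹ * g' u
      rw [hhdef]
      simp only
      rw [Matrix.mul_assoc, hgA u (hsub hx hu)]
    rw [h2, h1, hhr]
  obtain ⟨C0, hC0⟩ := isCompact_Icc.exists_bound_of_continuousOn hhcont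
  set C : ℝ := max C0 0 with hCdef
  have hCnn : 0 ≤ C := le_max_right _ _
  have hCb : ∀ x ∈ Set.Icc r s, ‖h x‖ ≤ C := fun x hx => (hC0 x hx).trans (le_max_left _ _)
  have hD : ∀ (K : ℕ), ∀ x ∈ Set.Icc r s,
      ‖h x - ∑ k ∈ Finset.range K, P k x‖ ≤ C * (M^K * (x - r)^K / K.factorial) := by
    intro K
    induction K with
    | zero =>
      intro x hx
      calc ‖h x - ∑ k ∈ Finset.range 0, P k x‖ = ‖h x‖ := by
            rw [Finset.range_zero, Finset.sum_empty, sub_zero]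
        _ ≤ C := hCb x hx
        _ = C * (M^0 * (x - r)^0 / (Nat.factorial 0)) := by norm_num
    | succ K ih =>
      intro x hx
      have hsumcont : ContinuousOn (fun u => ∑ k ∈ Finset.range K, P k u) (Set.Icc r s) := by
        refine continuousOn_finset_sum _ fun k _ => hPcont k
      have hDcont : ContinuousOn (fun u => (h u - ∑ k ∈ Finset.range K, P k u) * A u)
          (Set.Icc r s) := (hhcont.sub hsumcont).mul hA
      have hDint : IntervalIntegrable
          (fun u => (h u - ∑ k ∈ Finset.range K, P k u) * A u) volume r x :=
        (hDcont.mono (hsub hx)).intervalIntegrable_of_Icc hx.1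
      have hint_hA : IntervalIntegrable (fun u => h u * A u) volume r x :=
        (((hhcont.mono (hsub hx)).mul (hA.mono (hsub hx)))).intervalIntegrable_of_Icc hx.1
      have hint_sum : IntervalIntegrable
          (fun u => ∑ k ∈ Finset.range K, P k u * A u) volume r x :=
        (((continuousOn_finset_sum _ fun k _ => (hPcont k).mul hA).mono
          (hsub hx))).intervalIntegrable_of_Icc hx.1
      have hrw : h x - ∑ k ∈ Finset.range (K+1), P k x
          = ∫ u in r..x, (h u - ∑ k ∈ Finset.range K, P k u) * A u := by
        have e0 : ∀ u : ℝ, (h u - ∑ k ∈ Finset.range K, P k u) * A u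
            = h u * A u - ∑ k ∈ Finset.range K, P k u * A u := by
          intro u; rw [sub_mul, Finset.sum_mul]
        have e1 : (∫ u in r..x, (h u - ∑ k ∈ Finset.range K, P k u) * A u)
            = (∫ u in r..x, h u * A u)
              - ∑ k ∈ Finset.range K, ∫ u in r..x, P k u * A u := by
          simp only [e0]
          rw [intervalIntegral.integral_sub hint_hA hint_sum,
            intervalIntegral.integral_finset_sum fun k _ => hPint k hx]
        have e2 : ∑ k ∈ Finset.range (K+1), P k x
            = 1 + ∑ k ∈ Finset.range K, ∫ u in r..x, P k u * A u := by
          rw [Finset.sum_range_succ', hP0,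
            Finset.sum_congr rfl fun k _ => hPrec k hx, add_comm]
        rw [e1, hFTC x hx, e2]
        abel
      rw [hrw]
      have hb : ∀ u ∈ Set.Icc r x, ‖(h u - ∑ k ∈ Finset.range K, P k u) * A u‖
          ≤ C * (M^K * M / K.factorial) * (u - r)^K := by
        intro u hu
        have hus : u ∈ Set.Icc r s := hsub hx hu
        have h1 : ‖(h u - ∑ k ∈ Finset.range K, P k u) * A u‖
            ≤ ‖h u - ∑ k ∈ Finset.range K, P k u‖ * ‖A u‖ := norm_mul_le _ _
        have h2 : ‖h u - ∑ k ∈ Finset.range K, P k u‖ * ‖A u‖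
            ≤ (C * (M^K * (u - r)^K / K.factorial)) * M :=
          mul_le_mul (ih u hus) (hMA u hus) (norm_nonneg _)
            (mul_nonneg hCnn (div_nonneg (mul_nonneg (pow_nonneg hMnn _)
              (pow_nonneg (sub_nonneg.2 hu.1) _)) (Nat.cast_nonneg _)))
        refine (h1.trans h2).trans (le_of_eq (by ring))
      have hint1 : IntervalIntegrable
          (fun u => ‖(h u - ∑ k ∈ Finset.range K, P k u) * A u‖) volume r x := hDint.norm
      have hint2 : IntervalIntegrable
          (fun u => C * (M^K * M / K.factorial) * (u - r)^K) volume r x :=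
        (Continuous.intervalIntegrable
          (continuous_const.mul ((continuous_id.sub continuous_const).pow K)) r x)
      calc ‖∫ u in r..x, (h u - ∑ k ∈ Finset.range K, P k u) * A u‖
          ≤ ∫ u in r..x, ‖(h u - ∑ k ∈ Finset.range K, P k u) * A u‖ :=
            intervalIntegral.norm_integral_le_integral_norm hx.1
        _ ≤ ∫ u in r..x, C * (M^K * M / K.factorial) * (u - r)^K :=
            intervalIntegral.integral_mono_on hx.1 hint1 hint2 hb
        _ = C * (M^K * M / K.factorial) * ((x - r)^(K+1) / (K+1)) := by
            rw [intervalIntegral.integral_const_mul, hint_pow]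
        _ = C * (M^(K+1) * (x - r)^(K+1) / (K+1).factorial) := by
            rw [Nat.factorial_succ]
            push_cast
            field_simp
            ring
  have hPs : ∀ k : ℕ, ‖P k s‖ ≤ (M * (s - r))^k / k.factorial := by
    intro k
    have := hPbound k s hsmem
    rwa [mul_pow]
  have hsummable : Summable (fun k => P k s) :=
    Summable.of_norm_bounded (Real.summable_pow_div_factorial (M * (s - r))) hPs
  have htend0 : Filter.Tendsto (fun K : ℕ => C * (M^K * (s - r)^K / K.factorial))
      Filter.atTop (nhds 0) := by
    have h1 := (FloorSemiring.tendsto_pow_div_factorial_atTop (M * (s - r))).const_mul C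
    rw [mul_zero] at h1
    refine h1.congr fun K => by rw [mul_pow]
  have htends : Filter.Tendsto (fun K => ∑ k ∈ Finset.range K, P k s)
      Filter.atTop (nhds (h s)) := by
    refine tendsto_iff_norm_sub_tendsto_zero.2 ?_
    refine squeeze_zero (fun K => norm_nonneg _) (fun K => ?_) htend0
    rw [norm_sub_rev]
    exact hD K s hsmem
  have hfin : HasSum (fun k => P k s) (h s) := by
    have h1 := hsummable.hasSum
    have h2 := tendsto_nhds_unique h1.tendsto_sum_nat htends
    rwa [h2] at h1
  simpa only [hPdef, hAdef, hhdef] using hfin
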